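/- Let S_n be the star graph on n ≥ 3 vertices and let t, r be positive integers with t > r. Then the set of values γ_{t,r}(Ḡ) over all orientations Ḡ of S_n is exactly {1, 2, ..., n−1}. -/

import Mathlib

open Finset

/-- `DReach A n u v`: there is a directed walk of length `n` from `u` to `v`
in the digraph with arc relation `A`. -/
def DReach {V : Type*} (A : V → V → Prop) : ℕ → V → V → Prop
  | 0, u, v => u = v
  | n + 1, u, v => ∃ w, A u w ∧ DReach A n w v

/-- The signal a broadcasting vertex `u` of strength `t` sends to `w`:
`t - d(u,w)` where `d` is the directed distance (0 if `d(u,w) ≥ t` or `w` unreachable). -/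
noncomputable def dsignal {V : Type*} (A : V → V → Prop) (t : ℕ) (u w : V) : ℕ :=
  sSup {m : ℕ | ∃ n : ℕ, DReach A n u w ∧ m = t - n}

/-- The directed reception at `w` from the broadcast set `S` of strength `t`. -/
noncomputable def dreception {V : Type*} [Fintype V] (A : V → V → Prop) (t : ℕ)
    (S : Finset V) (w : V) : ℕ :=
  ∑ v ∈ S, dsignal A t v w

/-- `S` is a directed `(t,r)` broadcast dominating set of the digraph `A`. -/
def IsDomSet {V : Type*} [Fintype V] (A : V → V → Prop) (t r : ℕ) (S : Finset V) : Prop :=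
  ∀ w : V, r ≤ dreception A t S w

/-- The directed `(t,r)` broadcast domination number of the digraph `A`. -/
noncomputable def gamma {V : Type*} [Fintype V] (A : V → V → Prop) (t r : ℕ) : ℕ :=
  sInf {k : ℕ | ∃ S : Finset V, IsDomSet A t r S ∧ S.card = k}

/-- `A` is an orientation of the simple graph `G`: every arc is along an edge of `G`,
and each edge of `G` is directed in exactly one of the two directions. -/
def IsOrientation {V : Type*} (G : SimpleGraph V) (A : V → V → Prop) : Prop :=
  (∀ u v, A u v → G.Adj u v) ∧ ∀ u v, G.Adj u v → (A u v ↔ ¬ A v u)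

/-- `A₁` is obtained from `A₀` by reversing (flipping) a single arc. -/
def OneFlip {V : Type*} (A₀ A₁ : V → V → Prop) : Prop :=
  ∃ a b, A₀ a b ∧ A₁ b a ∧
    ∀ u v, ¬((u = a ∧ v = b) ∨ (u = b ∧ v = a)) → (A₀ u v ↔ A₁ u v)

/-- The star graph on `n` vertices: vertex with value `0` is the center. -/
def starGraph (n : ℕ) : SimpleGraph (Fin n) where
  Adj u v := u ≠ v ∧ (u.val = 0 ∨ v.val = 0)
  symm := by constructor; intro u v h; exact ⟨h.1.symm, h.2.symm⟩
  loopless := by constructor; intro u h; exact h.1 rfl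

section Aux

variable {V : Type*}

lemma dsignal_bdd (A : V → V → Prop) (t : ℕ) (u w : V) :
    BddAbove {m : ℕ | ∃ n : ℕ, DReach A n u w ∧ m = t - n} :=
  ⟨t, by rintro x ⟨n, -, rfl⟩; omega⟩

lemma dsignal_ge {A : V → V → Prop} {t m : ℕ} {u w : V} (h : DReach A m u w) :
    t - m ≤ dsignal A t u w :=
  le_csSup (dsignal_bdd A t u w) ⟨m, h, rfl⟩

lemma dsignal_le {A : V → V → Prop} {t d : ℕ} {u w : V}
    (h : ∀ m, DReach A m u w → d ≤ m) : dsignal A t u w ≤ t - d :=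
  csSup_le' (by rintro x ⟨m, hm, rfl⟩; have := h m hm; omega)

lemma dsignal_eq_zero {A : V → V → Prop} {t : ℕ} {u w : V}
    (h : ∀ m, ¬ DReach A m u w) : dsignal A t u w = 0 := by
  have : dsignal A t u w ≤ t - t := dsignal_le (fun m hm => absurd hm (h m))
  omega

end Aux

/-- The orientation of the star with sources the leaves of value `≤ s`. -/
def flowA (n s : ℕ) : Fin n → Fin n → Prop :=
  fun u v => (v.val = 0 ∧ u.val ≠ 0 ∧ u.val ≤ s) ∨ (u.val = 0 ∧ v.val ≠ 0 ∧ s < v.val)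

lemma flow_orient (n s : ℕ) : IsOrientation (starGraph n) (flowA n s) := by
  constructor
  · rintro u v (⟨h1, h2, h3⟩ | ⟨h1, h2, h3⟩)
    · exact ⟨fun e => h2 (by rw [e, h1]), Or.inr h1⟩
    · exact ⟨fun e => h2 (by rw [← e, h1]), Or.inl h1⟩
  · rintro u v ⟨hne, h0⟩
    have hv : u.val ≠ v.val := fun h => hne (Fin.ext h)
    simp only [flowA]
    omega

/-- Source leaves of `flowA n s`. -/
def src (n s : ℕ) : Finset (Fin n) :=
  Finset.univ.filter (fun v => v.val ≠ 0 ∧ v.val ≤ s)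

lemma mem_src {n s : ℕ} {v : Fin n} : v ∈ src n s ↔ v.val ≠ 0 ∧ v.val ≤ s := by
  simp [src]

lemma card_src {n s : ℕ} (hs : s ≤ n - 1) (hn : 1 ≤ n) : (src n s).card = s := by
  have : (src n s).card = (Finset.Icc 1 s).card := by
    apply Finset.card_bij (fun a _ => a.val)
    · intro a ha
      rw [mem_src] at ha
      simp only [Finset.mem_Icc]
      omega
    · intro a _ b _ h
      exact Fin.ext h
    · intro b hb
      simp only [Finset.mem_Icc] at hb
      exact ⟨⟨b, by omega⟩, mem_src.mpr ⟨by simp; omega, by simpa using hb.2⟩, rfl⟩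
  rw [this, Nat.card_Icc]
  omega

lemma zero_not_mem_src {n s : ℕ} (h0 : 0 < n) : (⟨0, h0⟩ : Fin n) ∉ src n s := by
  simp [mem_src]

/-- No walk ends at a source leaf except the trivial one. -/
lemma reach_src {n s : ℕ} {l : Fin n} (hl0 : l.val ≠ 0) (hls : l.val ≤ s) :
    ∀ m (v : Fin n), DReach (flowA n s) m v l → v = l := by
  intro m
  induction m with
  | zero => intro v h; exact h
  | succ m ih =>
    rintro v ⟨w, hvw, hw⟩
    have hwl := ih w hw
    subst hwl
    rcases hvw with ⟨h1, -⟩ | ⟨-, -, h3⟩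
    · exact absurd h1 hl0
    · omega

/-- A dominating set must contain all source leaves. -/
lemma src_subset {n s t r : ℕ} (hr : 1 ≤ r) {S : Finset (Fin n)}
    (hS : IsDomSet (flowA n s) t r S) : src n s ⊆ S := by
  intro l hl
  rw [mem_src] at hl
  by_contra hls
  have h0 : dreception (flowA n s) t S l = 0 := by
    unfold dreception
    apply Finset.sum_eq_zero
    intro v hv
    apply dsignal_eq_zero
    intro m hm
    exact hls (reach_src hl.1 hl.2 m v hm ▸ hv)
  have := hS l
  omega

/-- Walks from a source leaf to a sink leaf have length ≥ 2. -/
lemma reach_sink_ge_two {n s : ℕ} {l w : Fin n} (hl0 : l.val ≠ 0) (hls : l.val ≤ s)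
    (hw : s < w.val) : ∀ m, DReach (flowA n s) m l w → 2 ≤ m := by
  intro m hm
  match m, hm with
  | 0, hm => exact absurd (congrArg Fin.val hm) (by omega)
  | 1, ⟨x, hx, he⟩ =>
    rw [show DReach (flowA n s) 0 x w = (x = w) from rfl] at he
    subst he
    rcases hx with ⟨h1, -⟩ | ⟨h1, -⟩ <;> omega
  | (m+2), _ => omega

lemma gamma_eq {n : ℕ} (A : Fin n → Fin n → Prop) (t r k : ℕ)
    (S : Finset (Fin n)) (hS : IsDomSet A t r S) (hcard : S.card = k)
    (hmin : ∀ T : Finset (Fin n), IsDomSet A t r T → k ≤ T.card) :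
    gamma A t r = k := by
  apply le_antisymm
  · exact Nat.sInf_le ⟨S, hS, hcard⟩
  · exact le_csInf ⟨k, S, hS, hcard⟩ (by rintro b ⟨T, hT, rfl⟩; exact hmin T hT)

lemma gammaA {n s t r : ℕ} (hn : 3 ≤ n) (hs1 : 1 ≤ s) (hs : s ≤ n - 1)
    (hr : 1 ≤ r) (htr : r < t) (hcov : r ≤ s * (t - 2)) :
    gamma (flowA n s) t r = s := by
  have h0 : 0 < n := by omega
  have hdom : IsDomSet (flowA n s) t r (src n s) := by
    intro w
    unfold dreception
    by_cases hw0 : w.val = 0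
    · -- center: covered by source leaf 1
      have hl1 : (⟨1, by omega⟩ : Fin n) ∈ src n s := mem_src.mpr ⟨by simp, by simpa using hs1⟩
      have harc : DReach (flowA n s) 1 (⟨1, by omega⟩ : Fin n) w :=
        ⟨w, Or.inl ⟨hw0, by simp, by simpa using hs1⟩, rfl⟩
      calc r ≤ t - 1 := by omega
        _ ≤ dsignal (flowA n s) t ⟨1, by omega⟩ w := dsignal_ge harc
        _ ≤ _ := Finset.single_le_sum (f := fun v => dsignal (flowA n s) t v w) (fun i _ => Nat.zero_le _) hl1
    · by_cases hws : w.val ≤ s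
      · -- source leaf: covers itself
        have hw : w ∈ src n s := mem_src.mpr ⟨hw0, hws⟩
        calc r ≤ t - 0 := by omega
          _ ≤ dsignal (flowA n s) t w w := dsignal_ge rfl
          _ ≤ _ := Finset.single_le_sum (f := fun v => dsignal (flowA n s) t v w) (fun i _ => Nat.zero_le _) hw
      · -- sink leaf: covered by all sources
        push_neg at hws
        calc r ≤ s * (t - 2) := hcov
          _ = ∑ _l ∈ src n s, (t - 2) := by
              rw [Finset.sum_const, smul_eq_mul, card_src hs (by omega)]
          _ ≤ _ := by
              apply Finset.sum_le_sum
              intro l hl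
              rw [mem_src] at hl
              exact dsignal_ge ⟨⟨0, h0⟩, Or.inl ⟨rfl, hl.1, hl.2⟩,
                w, Or.inr ⟨rfl, hw0, hws⟩, rfl⟩
  exact gamma_eq _ t r s _ hdom (card_src hs (by omega))
    (fun T hT => card_src hs (by omega) ▸ Finset.card_le_card (src_subset hr hT))

lemma gammaB {n s t r : ℕ} (hn : 3 ≤ n) (hs : s ≤ n - 2)
    (hr : 1 ≤ r) (htr : r < t) (hcov : s * (t - 2) < r) :
    gamma (flowA n s) t r = s + 1 := by
  have h0 : 0 < n := by omega
  set z : Fin n := ⟨0, h0⟩ with hz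
  have hcard : (insert z (src n s)).card = s + 1 := by
    rw [Finset.card_insert_of_notMem (zero_not_mem_src h0), card_src (by omega) (by omega)]
  have hdom : IsDomSet (flowA n s) t r (insert z (src n s)) := by
    intro w
    unfold dreception
    by_cases hw0 : w.val = 0
    · have hwz : w = z := Fin.ext hw0
      calc r ≤ t - 0 := by omega
        _ ≤ dsignal (flowA n s) t z w := dsignal_ge (hwz ▸ rfl)
        _ ≤ _ := Finset.single_le_sum (f := fun v => dsignal (flowA n s) t v w) (fun i _ => Nat.zero_le _) (Finset.mem_insert_self z _)
    · by_cases hws : w.val ≤ s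
      · have hw : w ∈ insert z (src n s) :=
          Finset.mem_insert_of_mem (mem_src.mpr ⟨hw0, hws⟩)
        calc r ≤ t - 0 := by omega
          _ ≤ dsignal (flowA n s) t w w := dsignal_ge rfl
          _ ≤ _ := Finset.single_le_sum (f := fun v => dsignal (flowA n s) t v w) (fun i _ => Nat.zero_le _) hw
      · push_neg at hws
        calc r ≤ t - 1 := by omega
          _ ≤ dsignal (flowA n s) t z w := dsignal_ge ⟨w, Or.inr ⟨rfl, hw0, hws⟩, rfl⟩
          _ ≤ _ := Finset.single_le_sum (f := fun v => dsignal (flowA n s) t v w) (fun i _ => Nat.zero_le _) (Finset.mem_insert_self z _)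
  apply gamma_eq _ t r (s + 1) _ hdom hcard
  intro T hT
  by_contra hc
  push_neg at hc
  have hsub : src n s ⊆ T := src_subset hr hT
  have hTeq : src n s = T :=
    Finset.eq_of_subset_of_card_le hsub (by rw [card_src (by omega) (by omega)]; omega)
  -- sink leaf n-1 is under-covered
  set w : Fin n := ⟨n - 1, by omega⟩ with hw
  have hwval : s < w.val := by simp [hw]; omega
  have hrec : dreception (flowA n s) t T w ≤ s * (t - 2) := by
    unfold dreception
    rw [← hTeq]
    calc ∑ l ∈ src n s, dsignal (flowA n s) t l w
        ≤ ∑ _l ∈ src n s, (t - 2) := by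
          apply Finset.sum_le_sum
          intro l hl
          rw [mem_src] at hl
          exact dsignal_le (reach_sink_ge_two hl.1 hl.2 hwval)
      _ = s * (t - 2) := by
          rw [Finset.sum_const, smul_eq_mul, card_src (by omega) (by omega)]
  have := hT w
  omega

lemma gamma_bounds {n : ℕ} (hn : 3 ≤ n) {t r : ℕ} (hr : 1 ≤ r) (htr : r < t)
    {A : Fin n → Fin n → Prop} (hA : IsOrientation (starGraph n) A) :
    1 ≤ gamma A t r ∧ gamma A t r ≤ n - 1 := by
  have h0 : 0 < n := by omega
  set z : Fin n := ⟨0, h0⟩ with hz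
  -- produce a dominating set of card ≤ n - 1
  obtain ⟨S, hS, hcard⟩ : ∃ S : Finset (Fin n), IsDomSet A t r S ∧ S.card ≤ n - 1 := by
    by_cases hsrc : ∃ l : Fin n, l.val ≠ 0 ∧ A l z
    · obtain ⟨l, hl0, hlA⟩ := hsrc
      refine ⟨Finset.univ.erase z, ?_, ?_⟩
      · intro w
        unfold dreception
        by_cases hwz : w = z
        · have hlmem : l ∈ Finset.univ.erase z :=
            Finset.mem_erase.mpr ⟨fun e => hl0 (congrArg Fin.val e), Finset.mem_univ _⟩
          calc r ≤ t - 1 := by omega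
            _ ≤ dsignal A t l w := dsignal_ge ⟨z, hlA, hwz.symm⟩
            _ ≤ _ := Finset.single_le_sum (f := fun v => dsignal A t v w) (fun i _ => Nat.zero_le _) hlmem
        · have hwmem : w ∈ Finset.univ.erase z :=
            Finset.mem_erase.mpr ⟨hwz, Finset.mem_univ _⟩
          calc r ≤ t - 0 := by omega
            _ ≤ dsignal A t w w := dsignal_ge rfl
            _ ≤ _ := Finset.single_le_sum (f := fun v => dsignal A t v w) (fun i _ => Nat.zero_le _) hwmem
      · rw [Finset.card_erase_of_mem (Finset.mem_univ _), Finset.card_univ, Fintype.card_fin]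
    · push_neg at hsrc
      refine ⟨{z}, ?_, by simp; omega⟩
      intro w
      unfold dreception
      by_cases hwz : w = z
      · calc r ≤ t - 0 := by omega
          _ ≤ dsignal A t z w := dsignal_ge (hwz ▸ rfl)
          _ = ∑ v ∈ {z}, dsignal A t v w := (Finset.sum_singleton _ _).symm
      · have hw0 : w.val ≠ 0 := fun e => hwz (Fin.ext e)
        have hadj : (starGraph n).Adj z w := ⟨fun e => hwz e.symm, Or.inl rfl⟩
        have hzw : A z w := by
          rw [hA.2 z w hadj]
          exact hsrc w hw0
        calc r ≤ t - 1 := by omega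
          _ ≤ dsignal A t z w := dsignal_ge ⟨w, hzw, rfl⟩
          _ = ∑ v ∈ {z}, dsignal A t v w := (Finset.sum_singleton _ _).symm
  constructor
  · obtain ⟨T, hT, hTc⟩ :=
      Nat.sInf_mem (⟨S.card, S, hS, rfl⟩ :
        {k : ℕ | ∃ S : Finset (Fin n), IsDomSet A t r S ∧ S.card = k}.Nonempty)
    unfold gamma
    rw [← hTc]
    rcases Finset.eq_empty_or_nonempty T with rfl | h
    · exfalso
      have := hT z
      simp [dreception] at this
      omega
    · exact Finset.card_pos.mpr h
  · exact le_trans (Nat.sInf_le ⟨S, hS, rfl⟩) hcard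

theorem stmt8 (n : ℕ) (hn : 3 ≤ n) (t r : ℕ) (hr : 1 ≤ r) (htr : r < t) :
    {k : ℕ | ∃ A : Fin n → Fin n → Prop, IsOrientation (starGraph n) A ∧ gamma A t r = k}
      = Set.Icc 1 (n - 1) := by
  ext k
  simp only [Set.mem_setOf_eq, Set.mem_Icc]
  constructor
  · rintro ⟨A, hA, rfl⟩
    exact gamma_bounds hn hr htr hA
  · rintro ⟨hk1, hk2⟩
    by_cases hc : r ≤ k * (t - 2)
    · exact ⟨flowA n k, flow_orient n k, gammaA hn hk1 hk2 hr htr hc⟩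
    · push_neg at hc
      refine ⟨flowA n (k - 1), flow_orient n (k - 1), ?_⟩
      have h1 : (k - 1) * (t - 2) < r :=
        lt_of_le_of_lt (Nat.mul_le_mul_right _ (by omega)) hc
      rw [gammaB hn (by omega) hr htr h1]
      omega
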